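/- Let $C$ be an unbounded fin sequence. Then every completely separable MAD family consisting of selectors for $C$ is not fin-intersecting. -/
import Mathlib


open Set

/-- An almost disjoint family on ω: an infinite set of infinite subsets of ℕ
with pairwise finite intersections. -/
def ADFamily (A : Set (Set ℕ)) : Prop :=
  A.Infinite ∧ (∀ a ∈ A, a.Infinite) ∧
    ∀ a ∈ A, ∀ b ∈ A, a ≠ b → (a ∩ b).Finite

/-- A fin sequence: pairwise disjoint nonempty finite subsets of ℕ. -/
def FinSeq (C : ℕ → Finset ℕ) : Prop :=
  (∀ n, (C n).Nonempty) ∧ ∀ n m, n ≠ m → Disjoint (C n) (C m)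

/-- A collection of sets is centered iff every finite nonempty subcollection
has infinite intersection. -/
def Centered (𝒞 : Set (Set ℕ)) : Prop :=
  ∀ F : Finset (Set ℕ), ↑F ⊆ 𝒞 → F.Nonempty → (⋂₀ (F : Set (Set ℕ))).Infinite

/-- The collection {{n ∈ I : a ∩ C(n) ≠ ∅} : a ∈ A} \ [I]^{<ω}. -/
def traceFamily (A : Set (Set ℕ)) (C : ℕ → Finset ℕ) (I : Set ℕ) : Set (Set ℕ) :=
  {S | (∃ a ∈ A, S = {n ∈ I | ((C n : Set ℕ) ∩ a).Nonempty}) ∧ S.Infinite}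

/-- A is fin-intersecting. -/
def FinIntersecting (A : Set (Set ℕ)) : Prop :=
  ∀ C : ℕ → Finset ℕ, FinSeq C →
    ∃ I : Set ℕ, I.Infinite ∧ Centered (traceFamily A C I)

/-- Maximal almost disjoint family. -/
def MADFamily (A : Set (Set ℕ)) : Prop :=
  ADFamily A ∧ ∀ X : Set ℕ, X.Infinite → ∃ a ∈ A, (X ∩ a).Infinite

/-- X ∈ I⁺(A): X is not almost covered by finitely many members of A. -/
def IPlus (A : Set (Set ℕ)) (X : Set ℕ) : Prop :=
  ∀ B : Finset (Set ℕ), ↑B ⊆ A → (X \ ⋃₀ (B : Set (Set ℕ))).Infinite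

/-- The splitting number 𝔰. -/
noncomputable def splittingNumber : Cardinal :=
  sInf {c | ∃ S : Set (Set ℕ), c = Cardinal.mk S ∧ (∀ s ∈ S, s.Infinite) ∧
    ∀ X : Set ℕ, X.Infinite → ∃ s ∈ S, (X ∩ s).Infinite ∧ (X \ s).Infinite}


lemma aux_iplus (C : ℕ → Finset ℕ) (hC : FinSeq C)
    (hub : ∀ k : ℕ, {n : ℕ | (C n).card < k}.Finite)
    (A : Set (Set ℕ))
    (hsel : ∀ a ∈ A, ∀ n, ((C n : Set ℕ) ∩ a).Subsingleton)
    (J : Set ℕ) (hJ : J.Infinite) :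
    IPlus A (⋃ n ∈ J, (C n : Set ℕ)) := by
  classical
  intro B hB
  have hK : (J \ {n | (C n).card < B.card + 1}).Infinite :=
    hJ.diff (hub (B.card + 1))
  have hpick : ∀ n ∈ J \ {n | (C n).card < B.card + 1},
      ∃ x, x ∈ C n ∧ x ∉ ⋃₀ (B : Set (Set ℕ)) := by
    intro n hn
    by_contra hcon
    push_neg at hcon
    have hmap : ∀ x : {x // x ∈ C n}, ∃ b ∈ B, (x : ℕ) ∈ b := by
      intro x
      have := hcon x x.2
      rwa [Set.mem_sUnion] at this
    choose g hg1 hg2 using hmap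
    have hginj : Function.Injective g := by
      intro x y hxy
      have hx : (x : ℕ) ∈ (C n : Set ℕ) ∩ g x := ⟨x.2, hg2 x⟩
      have hy : (y : ℕ) ∈ (C n : Set ℕ) ∩ g x := ⟨y.2, by rw [hxy]; exact hg2 y⟩
      exact Subtype.ext (hsel (g x) (hB (hg1 x)) n hx hy)
    have hcard : (C n).card ≤ B.card := by
      have h1 : Fintype.card {x // x ∈ C n} ≤ B.card := by
        have := Fintype.card_le_of_injective (fun x => (⟨g x, hg1 x⟩ : {b // b ∈ B}))
          (fun x y hxy => hginj (by simpa using congrArg Subtype.val hxy))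
        simpa using this
      simpa using h1
    have : ¬ (C n).card < B.card + 1 := hn.2
    omega
  choose! x hx1 hx2 using hpick
  have hinjK : Set.InjOn x (J \ {n | (C n).card < B.card + 1}) := by
    intro n hn m hm hxy
    by_contra hne
    have hd := hC.2 n m hne
    have h1 : x n ∈ C n := hx1 n hn
    have h2 : x n ∈ C m := by rw [hxy]; exact hx1 m hm
    exact (Finset.disjoint_left.mp hd h1) h2
  have himg : x '' (J \ {n | (C n).card < B.card + 1}) ⊆
      (⋃ n ∈ J, (C n : Set ℕ)) \ ⋃₀ (B : Set (Set ℕ)) := by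
    rintro _ ⟨n, hn, rfl⟩
    exact ⟨Set.mem_biUnion hn.1 (hx1 n hn), hx2 n hn⟩
  exact ((hK.image hinjK).mono himg)

lemma aux_trace (C : ℕ → Finset ℕ) (hC : FinSeq C)
    (a : Set ℕ) (ha : a.Infinite)
    (hsel : ∀ n, ((C n : Set ℕ) ∩ a).Subsingleton)
    (I J : Set ℕ) (hJI : J ⊆ I)
    (hsub : a ⊆ ⋃ n ∈ J, (C n : Set ℕ)) :
    {n ∈ I | ((C n : Set ℕ) ∩ a).Nonempty}.Infinite ∧
      {n ∈ I | ((C n : Set ℕ) ∩ a).Nonempty} ⊆ J := by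
  classical
  have hmem : ∀ x ∈ a, ∃ n ∈ J, x ∈ C n := by
    intro x hx
    simpa using hsub hx
  choose! m hm1 hm2 using hmem
  constructor
  · have hinj : Set.InjOn m a := by
      intro x hx y hy hxy
      have h1 : x ∈ (C (m x) : Set ℕ) ∩ a := ⟨hm2 x hx, hx⟩
      have h2 : y ∈ (C (m x) : Set ℕ) ∩ a := ⟨by rw [hxy]; exact hm2 y hy, hy⟩
      exact hsel (m x) h1 h2
    have himg : m '' a ⊆ {n ∈ I | ((C n : Set ℕ) ∩ a).Nonempty} := by
      rintro _ ⟨x, hx, rfl⟩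
      exact ⟨hJI (hm1 x hx), ⟨x, hm2 x hx, hx⟩⟩
    exact (ha.image hinj).mono himg
  · rintro n ⟨hnI, x, hxC, hxa⟩
    have hmx := hm1 x hxa
    have hn : n = m x := by
      by_contra hne
      exact (Finset.disjoint_left.mp (hC.2 n (m x) hne) hxC) (hm2 x hxa)
    rw [hn]; exact hmx

theorem stmt8 (C : ℕ → Finset ℕ) (hC : FinSeq C)
    (hub : ∀ k : ℕ, {n : ℕ | (C n).card < k}.Finite)
    (A : Set (Set ℕ)) (hA : MADFamily A)
    (hsel : ∀ a ∈ A, ∀ n, ((C n : Set ℕ) ∩ a).Subsingleton)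
    (hcs : ∀ X : Set ℕ, IPlus A X → ∃ a ∈ A, a ⊆ X) :
    ¬ FinIntersecting A := by
  classical
  intro hfi
  obtain ⟨I, hIinf, hcent⟩ := hfi C hC
  set f := hIinf.natEmbedding with hf
  have hinj : Function.Injective (fun k : ℕ => (f k : ℕ)) :=
    fun x y h => f.injective (Subtype.coe_injective h)
  set I₁ : Set ℕ := Set.range (fun k => (f (2*k) : ℕ)) with hI₁
  set I₂ : Set ℕ := Set.range (fun k => (f (2*k+1) : ℕ)) with hI₂
  have hI₁inf : I₁.Infinite := Set.infinite_range_of_injective (by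
    intro x y h
    have := hinj h
    omega)
  have hI₂inf : I₂.Infinite := Set.infinite_range_of_injective (by
    intro x y h
    have := hinj h
    omega)
  have hI₁sub : I₁ ⊆ I := by rintro _ ⟨k, rfl⟩; exact (f (2*k)).2
  have hI₂sub : I₂ ⊆ I := by rintro _ ⟨k, rfl⟩; exact (f (2*k+1)).2
  have hdisj : ∀ x, x ∈ I₁ → x ∈ I₂ → False := by
    rintro _ ⟨k, rfl⟩ ⟨j, hj⟩
    have := hinj hj
    omega
  obtain ⟨a₁, ha₁A, ha₁sub⟩ := hcs _ (aux_iplus C hC hub A hsel I₁ hI₁inf)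
  obtain ⟨a₂, ha₂A, ha₂sub⟩ := hcs _ (aux_iplus C hC hub A hsel I₂ hI₂inf)
  obtain ⟨hT₁inf, hT₁sub⟩ :=
    aux_trace C hC a₁ (hA.1.2.1 a₁ ha₁A) (hsel a₁ ha₁A) I I₁ hI₁sub ha₁sub
  obtain ⟨hT₂inf, hT₂sub⟩ :=
    aux_trace C hC a₂ (hA.1.2.1 a₂ ha₂A) (hsel a₂ ha₂A) I I₂ hI₂sub ha₂sub
  set S₁ := {n ∈ I | ((C n : Set ℕ) ∩ a₁).Nonempty} with hS₁
  set S₂ := {n ∈ I | ((C n : Set ℕ) ∩ a₂).Nonempty} with hS₂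
  have hmem₁ : S₁ ∈ traceFamily A C I := ⟨⟨a₁, ha₁A, rfl⟩, hT₁inf⟩
  have hmem₂ : S₂ ∈ traceFamily A C I := ⟨⟨a₂, ha₂A, rfl⟩, hT₂inf⟩
  have hF : (↑({S₁, S₂} : Finset (Set ℕ)) : Set (Set ℕ)) ⊆ traceFamily A C I := by
    intro S hS
    simp only [Finset.coe_insert, Finset.coe_singleton, Set.mem_insert_iff,
      Set.mem_singleton_iff] at hS
    rcases hS with rfl | rfl
    · exact hmem₁
    · exact hmem₂
  have hne : ({S₁, S₂} : Finset (Set ℕ)).Nonempty := ⟨S₁, by simp⟩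
  have hinf := hcent _ hF hne
  obtain ⟨n, hn⟩ := hinf.nonempty
  simp only [Finset.coe_insert, Finset.coe_singleton, Set.sInter_insert,
    Set.sInter_singleton, Set.mem_inter_iff] at hn
  exact hdisj n (hT₁sub hn.1) (hT₂sub hn.2)
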